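/- Let Γ be a connected multigraph with at least two vertices and g an integer. Then every stability polytope of V(Γ) is a convex and bounded subset of the affine space V(Γ). -/

import Mathlib

namespace ThetaPaper

/-- The adjacency relation within a vertex set `S`: `a` and `b` lie in `S`
and are joined by an edge of the multigraph with edge-endpoint map `ends`. -/
def AdjOn {V E : Type} (ends : E → Sym2 V) (S : Set V) (a b : V) : Prop :=
  a ∈ S ∧ b ∈ S ∧ ∃ e, ends e = s(a, b)

/-- The induced subgraph on `S` is (nonempty and) connected. -/
def ConnectedOn {V E : Type} (ends : E → Sym2 V) (S : Set V) : Prop :=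
  S.Nonempty ∧ ∀ a ∈ S, ∀ b ∈ S, Relation.ReflTransGen (AdjOn ends S) a b

/-- The multigraph is connected. -/
def GraphConnected {V E : Type} (ends : E → Sym2 V) : Prop :=
  ConnectedOn ends Set.univ

/-- A nonempty proper subset `S` of the vertices is elementary if both the induced
subgraph on `S` and the induced subgraph on its complement are connected. -/
def Elementary {V E : Type} (ends : E → Sym2 V) (S : Set V) : Prop :=
  S.Nonempty ∧ Sᶜ.Nonempty ∧ ConnectedOn ends S ∧ ConnectedOn ends Sᶜ

/-- `cut S` is the number of edges with one endpoint in `S` and the other outside. -/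
noncomputable def cut {V E : Type} (ends : E → Sym2 V) (S : Set V) : ℕ :=
  Nat.card {e : E // ∃ a b, ends e = s(a, b) ∧ a ∈ S ∧ b ∉ S}

/-- `ℓ(S,d)(φ) = d − Σ_{v∈S} φ(v) + cut(S)/2`. -/
noncomputable def ell {V E : Type} (ends : E → Sym2 V) (S : Set V) (d : ℤ) (φ : V → ℝ) : ℝ :=
  (d : ℝ) - (∑ᶠ v ∈ S, φ v) + (cut ends S : ℝ) / 2

/-- `φ` is nondegenerate: it lies on no stability hyperplane. -/
def Nondegenerate {V E : Type} (ends : E → Sym2 V) (φ : V → ℝ) : Prop :=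
  ∀ S : Set V, Elementary ends S → ∀ d : ℤ, ell ends S d φ ≠ 0

/-- The multigraph has loop-free circuit rank 0: after deleting all loops it is a tree
(connected, with number of edges = number of vertices − 1). -/
def RankZero {V E : Type} [Fintype V] (ends : E → Sym2 V) : Prop :=
  GraphConnected (fun e : {e : E // ¬ (ends e).IsDiag} => ends e.1) ∧
  Nat.card {e : E // ¬ (ends e).IsDiag} + 1 = Fintype.card V

/-- A sheaf model of degree `g−1`: a multidegree `dd` on the vertices together with a
set `N` of nodes (where the corresponding sheaf fails to be locally free), with
`Σ dd + #N = g − 1`. -/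
def IsSheafModel {V E : Type} [Fintype V] (dd : V → ℤ) (N : Set E) (g : ℤ) : Prop :=
  (∑ v, dd v) + (Nat.card N : ℤ) = g - 1

/-- The degree of the sheaf model `(dd, N)` on the subcurve with vertex set `S`:
`Σ_{v∈S} dd v` plus the number of edges of `N` with both endpoints in `S`. -/
noncomputable def degS {V E : Type} (ends : E → Sym2 V) (dd : V → ℤ) (N : Set E)
    (S : Set V) : ℤ :=
  (∑ᶠ v ∈ S, dd v) + (Nat.card {e : E // e ∈ N ∧ ∀ v ∈ ends e, v ∈ S} : ℤ)

/-- `φ`-semistability of a sheaf model. -/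
def Semistable {V E : Type} (ends : E → Sym2 V) (dd : V → ℤ) (N : Set E)
    (φ : V → ℝ) : Prop :=
  ∀ S : Set V, S.Nonempty → S ≠ Set.univ →
    (∑ᶠ v ∈ S, φ v) - (cut ends S : ℝ) / 2 ≤ (degS ends dd N S : ℝ)

/-- `φ`-stability of a sheaf model. -/
def Stable {V E : Type} (ends : E → Sym2 V) (dd : V → ℤ) (N : Set E)
    (φ : V → ℝ) : Prop :=
  ∀ S : Set V, S.Nonempty → S ≠ Set.univ →
    (∑ᶠ v ∈ S, φ v) - (cut ends S : ℝ) / 2 < (degS ends dd N S : ℝ)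

/-- The set of nondegenerate elements of the affine space `V(Γ)` (with the real
number `gr` playing the role of `g`). -/
def OmegaSet {V E : Type} [Fintype V] (ends : E → Sym2 V) (gr : ℝ) : Set (V → ℝ) :=
  {φ | (∑ v, φ v) = gr - 1 ∧ Nondegenerate ends φ}

/-- `P` is a stability polytope of `V(Γ)`: a connected component of the complement in
`V(Γ)` of the union of all stability hyperplanes. -/
def IsStabPolytope {V E : Type} [Fintype V] (ends : E → Sym2 V) (gr : ℝ)
    (P : Set (V → ℝ)) : Prop :=
  ∃ φ0 ∈ OmegaSet ends gr, P = connectedComponentIn (OmegaSet ends gr) φ0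
section Aux

open Relation Set

variable {V E : Type} {ends : E → Sym2 V}

lemma adjOn_symm {S : Set V} {a b : V} (h : AdjOn ends S a b) : AdjOn ends S b a := by
  obtain ⟨ha, hb, e, he⟩ := h
  exact ⟨hb, ha, e, by rw [he, Sym2.eq_swap]⟩

lemma adjOn_mono {S S' : Set V} (hss : S ⊆ S') {a b : V} (h : AdjOn ends S a b) :
    AdjOn ends S' a b := ⟨hss h.1, hss h.2.1, h.2.2⟩

lemma rtg_mono {S S' : Set V} (hss : S ⊆ S') {a b : V}
    (h : ReflTransGen (AdjOn ends S) a b) : ReflTransGen (AdjOn ends S') a b :=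
  ReflTransGen.mono (r := AdjOn ends S) (p := AdjOn ends S') (fun _ _ hab => adjOn_mono hss hab) a b h

lemma connectedOn_singleton {v : V} : ConnectedOn ends {v} := by
  refine ⟨⟨v, rfl⟩, ?_⟩
  rintro a rfl b rfl
  exact ReflTransGen.refl

/-- If every point of `S` reaches `v ∈ S`, then `S` is connected. -/
lemma connectedOn_of_forall_to {S : Set V} {v : V} (hv : v ∈ S)
    (h : ∀ x ∈ S, ReflTransGen (AdjOn ends S) x v) : ConnectedOn ends S := by
  refine ⟨⟨v, hv⟩, fun a ha b hb => ?_⟩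
  have hsymm : Symmetric (ReflTransGen (AdjOn ends S)) :=
    fun x y hxy => @Std.Symm.symm _ _ (@ReflTransGen.stdSymm _ _ ⟨fun _ _ hh => adjOn_symm hh⟩) x y hxy
  exact (h a ha).trans (hsymm (h b hb))

lemma first_step {r : V → V → Prop} {a b : V} (h : ReflTransGen r a b) (hne : a ≠ b) :
    ∃ c, r a c ∧ c ≠ a := by
  revert hne
  induction h using ReflTransGen.head_induction_on with
  | refl => intro hne; exact absurd rfl hne
  | @head x c h' hrest ih =>
    intro hne
    by_cases hcx : c = x
    · subst hcx; exact ih hne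
    · exact ⟨c, h', hcx⟩

end Aux
section Reach

open Relation Set

variable {V E : Type} {ends : E → Sym2 V}

/-- Chains of length `n` (tail-first). -/
def ReachN (r : V → V → Prop) : ℕ → V → V → Prop
  | 0, a, b => a = b
  | n + 1, a, b => ∃ c, ReachN r n a c ∧ r c b

lemma exists_reachN {r : V → V → Prop} {a b : V} (h : ReflTransGen r a b) :
    ∃ n, ReachN r n a b := by
  induction h with
  | refl => exact ⟨0, rfl⟩
  | tail _ hbc ih => obtain ⟨n, hn⟩ := ih; exact ⟨n + 1, _, hn, hbc⟩

/-- A connected set with at least two elements has a removable vertex. -/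
lemma exists_removable [Finite V] {A : Set V} (hA : ConnectedOn ends A)
    (h2 : ∃ u ∈ A, ∃ w ∈ A, u ≠ w) :
    ∃ v ∈ A, (A \ {v}).Nonempty ∧ ConnectedOn ends (A \ {v}) := by
  classical
  obtain ⟨u, hu, w, hw, huw⟩ := h2
  set r := AdjOn ends A with hr
  have hreach : ∀ x ∈ A, ∃ n, ReachN r n u x := fun x hx =>
    exists_reachN (hA.2 u hu x hx)
  set d : V → ℕ := fun x => sInf {n | ReachN r n u x} with hd
  have hdmem : ∀ x ∈ A, ReachN r (d x) u x := fun x hx => Nat.sInf_mem (hreach x hx)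
  have hdle : ∀ x n, ReachN r n u x → d x ≤ n := fun x n hn => Nat.sInf_le hn
  -- maximizer of d on A
  obtain ⟨v, hvF, hvmax⟩ := Finset.exists_max_image A.toFinite.toFinset d
    ⟨u, A.toFinite.mem_toFinset.2 hu⟩
  have hv : v ∈ A := A.toFinite.mem_toFinset.1 hvF
  have hmax : ∀ x ∈ A, d x ≤ d v := fun x hx => hvmax x (A.toFinite.mem_toFinset.2 hx)
  have hdu : d u = 0 := Nat.le_zero.1 (hdle u 0 rfl)
  have hdw : d w ≠ 0 := by
    intro h0
    have := hdmem w hw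
    rw [h0] at this
    exact huw this
  have hvu : v ≠ u := by
    intro h; rw [h, hdu] at hmax
    exact hdw (Nat.le_zero.1 (hmax w hw))
  have humem : u ∈ A \ {v} := ⟨hu, fun h => hvu (Set.mem_singleton_iff.1 h).symm⟩
  refine ⟨v, hv, ⟨u, humem⟩, connectedOn_of_forall_to humem ?_⟩
  -- every x in A \ {v} reaches u within A \ {v}
  have key : ∀ n, ∀ x ∈ A, x ≠ v → d x ≤ n →
      ReflTransGen (AdjOn ends (A \ {v})) u x := by
    intro n
    induction n using Nat.strong_induction_on with
    | _ n IH =>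
      intro x hx hxv hdxn
      have hm := hdmem x hx
      rcases hk : d x with _ | k
      · rw [hk] at hm; exact hm ▸ ReflTransGen.refl
      · rw [hk] at hm
        obtain ⟨c, hrc, hadj⟩ := hm
        have hcA : c ∈ A := hadj.1
        have hdc : d c ≤ k := hdle c k hrc
        have hcv : c ≠ v := by
          intro h
          have h1 : d v ≤ k := h ▸ hdc
          have h2 : d x ≤ d v := hmax x hx
          omega
        have hkn : k < n := by omega
        have hpath := IH k hkn c hcA hcv hdc
        exact hpath.tail ⟨⟨hcA, hcv⟩, ⟨hx, hxv⟩, hadj.2.2⟩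
  intro x hx
  have hsymm : Symmetric (ReflTransGen (AdjOn ends (A \ {v}))) :=
    fun x y hxy => @Std.Symm.symm _ _ (@ReflTransGen.stdSymm _ _ ⟨fun _ _ hh => adjOn_symm hh⟩) x y hxy
  exact hsymm (key (d x) x hx.1 hx.2 le_rfl)
end Reach
section Span

open Relation Set Submodule

variable {V E : Type} [Fintype V] (ends : E → Sym2 V)

/-- Generators: indicator functions of elementary sets together with the constant 1. -/
def Gens : Set (V → ℝ) :=
  {x | ∃ S : Set V, Elementary ends S ∧ x = Set.indicator S (fun _ => (1 : ℝ))} ∪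
    {fun _ => (1 : ℝ)}

variable {ends}

lemma ind_sum_singletons (S : Set V) :
    Set.indicator S (fun _ => (1 : ℝ)) =
      ∑ w ∈ S.toFinite.toFinset, Set.indicator {w} (fun _ => (1 : ℝ)) := by
  classical
  funext x
  rw [Finset.sum_apply]
  by_cases hx : x ∈ S
  · rw [Set.indicator_of_mem hx]
    rw [Finset.sum_eq_single x]
    · simp
    · intro b _ hbx
      simp [Set.indicator_apply, Ne.symm hbx]
    · intro hxs
      exact absurd (S.toFinite.mem_toFinset.2 hx) hxs
  · rw [Set.indicator_of_notMem hx]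
    symm
    apply Finset.sum_eq_zero
    intro b hb
    have hbx : x ≠ b := by
      rintro rfl; exact hx (S.toFinite.mem_toFinset.1 hb)
    simp [Set.indicator_apply, hbx]

lemma ind_mem_span {S : Set V}
    (h : ∀ w ∈ S, Set.indicator {w} (fun _ => (1 : ℝ)) ∈ span ℝ (Gens ends)) :
    Set.indicator S (fun _ => (1 : ℝ)) ∈ span ℝ (Gens ends) := by
  rw [ind_sum_singletons]
  exact Submodule.sum_mem _ (fun w hw => h w (S.toFinite.mem_toFinset.1 hw))

/-- Main induction: singleton indicators of vertices of a "liftable" connected set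
are in the span of elementary indicators and the constant. -/
lemma span_main : ∀ (N : ℕ) (A : Set V), A.ncard ≤ N → A.Nonempty → ConnectedOn ends A →
    (∀ T : Set V, T ⊆ A → T.Nonempty → (A \ T).Nonempty → ConnectedOn ends T →
      ConnectedOn ends (A \ T) → ∃ W, W ⊆ Aᶜ ∧ Elementary ends (T ∪ W)) →
    (∀ w, w ∉ A → Set.indicator {w} (fun _ => (1 : ℝ)) ∈ span ℝ (Gens ends)) →
    ∀ v ∈ A, Set.indicator {v} (fun _ => (1 : ℝ)) ∈ span ℝ (Gens ends) := by
  intro N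
  induction N with
  | zero =>
    intro A hcard hne _ _ _ v hv
    have := hne.ncard_pos A.toFinite
    omega
  | succ N IH =>
    intro A hcard hne hconnA hlift hout v hv
    by_cases h2 : ∃ u ∈ A, ∃ w ∈ A, u ≠ w
    · -- at least two vertices: remove a non-cut vertex v0
      obtain ⟨v0, hv0, hA'ne, hA'conn⟩ := exists_removable hconnA h2
      set A' := A \ {v0} with hA'
      -- indicator of {v0} is in the span
      have hv0mem : Set.indicator {v0} (fun _ => (1 : ℝ)) ∈ span ℝ (Gens ends) := by
        obtain ⟨W, hW, hel⟩ := hlift {v0} (singleton_subset_iff.2 hv0) ⟨v0, rfl⟩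
          hA'ne connectedOn_singleton hA'conn
        have hdisj : Disjoint ({v0} : Set V) W :=
          Set.disjoint_left.2 (by rintro x rfl hxW; exact (hW hxW) hv0)
        have hind : Set.indicator ({v0} ∪ W) (fun _ => (1 : ℝ)) =
            Set.indicator {v0} (fun _ => (1 : ℝ)) + Set.indicator W (fun _ => (1 : ℝ)) := by
          rw [Set.indicator_union_of_disjoint hdisj]; rfl
        have h1 : Set.indicator ({v0} ∪ W) (fun _ => (1 : ℝ)) ∈ span ℝ (Gens ends) :=
          Submodule.subset_span (Or.inl ⟨_, hel, rfl⟩)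
        have h2' : Set.indicator W (fun _ => (1 : ℝ)) ∈ span ℝ (Gens ends) :=
          ind_mem_span (fun w hw => hout w (hW hw))
        have : Set.indicator ({v0} : Set V) (fun _ => (1 : ℝ)) =
            Set.indicator ({v0} ∪ W) (fun _ => (1 : ℝ)) - Set.indicator W (fun _ => (1 : ℝ)) := by
          rw [hind]; ring
        rw [this]
        exact Submodule.sub_mem _ h1 h2'
      rcases eq_or_ne v v0 with rfl | hvv0
      · exact hv0mem
      -- otherwise use the IH on A'
      have hvA' : v ∈ A' := ⟨hv, hvv0⟩
      have hcard' : A'.ncard ≤ N := by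
        rw [hA', Set.ncard_diff_singleton_of_mem hv0]
        have : 1 ≤ A.ncard := hne.ncard_pos A.toFinite
        omega
      -- A' inherits the lifting property
      have hlift' : ∀ T : Set V, T ⊆ A' → T.Nonempty → (A' \ T).Nonempty →
          ConnectedOn ends T → ConnectedOn ends (A' \ T) →
          ∃ W, W ⊆ A'ᶜ ∧ Elementary ends (T ∪ W) := by
        intro T hTA' hTne hATne hTconn hATconn
        have hv0T : v0 ∉ T := fun h => (hTA' h).2 rfl
        have hcompl : Aᶜ ⊆ A'ᶜ := compl_subset_compl.2 (diff_subset)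
        -- v0 has a neighbour c ≠ v0 in A
        obtain ⟨b, hb⟩ := hA'ne
        have hpath := hconnA.2 v0 hv0 b hb.1
        obtain ⟨c, hadj, hcv0⟩ := first_step hpath (fun h => hb.2 h.symm)
        have hcA' : c ∈ A' := ⟨hadj.2.1, hcv0⟩
        by_cases hnb : ∃ u ∈ A' \ T, AdjOn ends A v0 u
        · -- v0 attaches to the complement side: T is elementary relative to A
          obtain ⟨u0, hu0, hadju⟩ := hnb
          have hsetEq : A \ T = insert v0 (A' \ T) := by
            ext x
            constructor
            · rintro ⟨hxA, hxT⟩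
              by_cases hxv : x = v0
              · exact Or.inl hxv
              · exact Or.inr ⟨⟨hxA, hxv⟩, hxT⟩
            · rintro (rfl | ⟨⟨hxA, _⟩, hxT⟩)
              · exact ⟨hv0, hv0T⟩
              · exact ⟨hxA, hxT⟩
          have hATsub : A' \ T ⊆ A \ T := by
            rintro x ⟨⟨hxA, _⟩, hxT⟩; exact ⟨hxA, hxT⟩
          have hv0AT : v0 ∈ A \ T := ⟨hv0, hv0T⟩
          have hu0AT : u0 ∈ A \ T := hATsub hu0
          have hconnAT : ConnectedOn ends (A \ T) := by
            apply connectedOn_of_forall_to hv0AT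
            intro x hx
            rcases eq_or_ne x v0 with rfl | hxv0
            · exact ReflTransGen.refl
            · have hxA' : x ∈ A' \ T := by
                obtain ⟨hxA, hxT⟩ := hx
                exact ⟨⟨hxA, hxv0⟩, hxT⟩
              have hxu0 : ReflTransGen (AdjOn ends (A \ T)) x u0 :=
                rtg_mono hATsub (hATconn.2 x hxA' u0 hu0)
              refine hxu0.tail ⟨hu0AT, hv0AT, ?_⟩
              obtain ⟨_, _, e, he⟩ := hadju
              exact ⟨e, by rw [he, Sym2.eq_swap]⟩
          obtain ⟨W, hW, hel⟩ := hlift T (hTA'.trans diff_subset) hTne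
            ⟨v0, hv0AT⟩ hTconn hconnAT
          exact ⟨W, hW.trans hcompl, hel⟩
        · -- v0 attaches only to T
          have hcT : c ∈ T := by
            by_contra hcnT
            exact hnb ⟨c, ⟨hcA', hcnT⟩, hadj⟩
          set T' := insert v0 T with hT'
          have hT'sub : T' ⊆ A := insert_subset hv0 (hTA'.trans diff_subset)
          have hT'conn : ConnectedOn ends T' := by
            apply connectedOn_of_forall_to (mem_insert v0 T)
            intro x hx
            rcases eq_or_ne x v0 with rfl | hxv0
            · exact ReflTransGen.refl
            · have hxT : x ∈ T := hx.resolve_left hxv0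
              have hxc : ReflTransGen (AdjOn ends T') x c :=
                rtg_mono (subset_insert v0 T) (hTconn.2 x hxT c hcT)
              refine hxc.tail ⟨mem_insert_of_mem _ hcT, mem_insert v0 T, ?_⟩
              obtain ⟨_, _, e, he⟩ := hadj
              exact ⟨e, by rw [he, Sym2.eq_swap]⟩
          have hsetEq : A \ T' = A' \ T := by
            rw [hT', Set.insert_eq, hA']
            rw [Set.diff_diff]
          obtain ⟨W', hW', hel'⟩ := hlift T' hT'sub ⟨v0, mem_insert v0 T⟩
            (hsetEq ▸ hATne) hT'conn (hsetEq ▸ hATconn)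
          refine ⟨insert v0 W', ?_, ?_⟩
          · apply insert_subset
            · exact fun h => h.2 rfl
            · exact hW'.trans hcompl
          · have : T ∪ insert v0 W' = T' ∪ W' := by
              rw [hT', Set.insert_eq, Set.insert_eq]
              ext x; simp; tauto
            rw [this]
            exact hel'
      have hout' : ∀ w, w ∉ A' → Set.indicator {w} (fun _ => (1 : ℝ)) ∈ span ℝ (Gens ends) := by
        intro w hw
        by_cases hwv0 : w = v0
        · exact hwv0 ▸ hv0mem
        · refine hout w (fun hwA => hw ⟨hwA, hwv0⟩)
      exact IH A' hcard' hA'ne hA'conn hlift' hout' v hvA'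
    · -- A is a singleton
      push_neg at h2
      have hAv : A = {v} := by
        apply Set.eq_singleton_iff_unique_mem.2
        exact ⟨hv, fun x hx => h2 x hx v hv⟩
      have honecomp : Set.indicator Aᶜ (fun _ => (1 : ℝ)) ∈ span ℝ (Gens ends) :=
        ind_mem_span (fun w hw => hout w hw)
      have hone : (fun _ => (1 : ℝ)) ∈ span ℝ (Gens ends) :=
        Submodule.subset_span (Or.inr rfl)
      have hsplit : Set.indicator A (fun _ => (1 : ℝ)) =
          (fun _ => (1 : ℝ)) - Set.indicator Aᶜ (fun _ => (1 : ℝ)) := by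
        funext x
        by_cases hx : x ∈ A <;>
          simp [Set.indicator_apply, hx]
      rw [← hAv, hsplit]
      exact Submodule.sub_mem _ hone honecomp

/-- Every vertex indicator lies in the span of elementary indicators plus the constant. -/
lemma singleton_ind_mem (hconn : GraphConnected ends) (hcard : 2 ≤ Fintype.card V)
    (v : V) : Set.indicator {v} (fun _ => (1 : ℝ)) ∈ span ℝ (Gens ends) := by
  have hne : (Set.univ : Set V).Nonempty := by
    have : Nonempty V := Fintype.card_pos_iff.1 (by omega)
    exact Set.univ_nonempty
  apply span_main (Set.univ : Set V).ncard Set.univ le_rfl hne hconn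
  · intro T _ hTne hcTne hTconn hcTconn
    refine ⟨∅, empty_subset _, ?_⟩
    rw [Set.union_empty]
    have hcompl : (Set.univ : Set V) \ T = Tᶜ := by
      rw [Set.compl_eq_univ_diff]
    refine ⟨hTne, ?_, hTconn, ?_⟩
    · rw [← hcompl]; exact hcTne
    · rw [← hcompl]; exact hcTconn
  · intro w hw
    exact absurd (Set.mem_univ w) hw
  · exact Set.mem_univ v

end Span
section Poly

open Set

variable {V E : Type} [Fintype V]

lemma finsum_mem_eq_sum' (S : Set V) (φ : V → ℝ) :
    ∑ᶠ v ∈ S, φ v = ∑ v ∈ S.toFinite.toFinset, φ v := by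
  rw [← finsum_mem_coe_finset, Set.Finite.coe_toFinset]

variable (ends : E → Sym2 V)

/-- The candidate convex region containing `φ0`. -/
def PolyC (gr : ℝ) (φ0 : V → ℝ) : Set (V → ℝ) :=
  {φ | (∑ v, φ v) = gr - 1 ∧ ∀ S : Set V, Elementary ends S →
    ((⌊(∑ᶠ v ∈ S, φ0 v) - (cut ends S : ℝ) / 2⌋ : ℝ) <
        (∑ᶠ v ∈ S, φ v) - (cut ends S : ℝ) / 2 ∧
      (∑ᶠ v ∈ S, φ v) - (cut ends S : ℝ) / 2 <
        (⌊(∑ᶠ v ∈ S, φ0 v) - (cut ends S : ℝ) / 2⌋ : ℝ) + 1)}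

variable {ends}

lemma combo_lemma {lo hi x y a b : ℝ} (ha : 0 ≤ a) (hb : 0 ≤ b) (hab : a + b = 1)
    (h1 : lo < x) (h2 : x < hi) (h3 : lo < y) (h4 : y < hi) :
    lo < a * x + b * y ∧ a * x + b * y < hi := by
  have hlo : a * lo + b * lo = lo := by rw [← add_mul, hab, one_mul]
  have hhi : a * hi + b * hi = hi := by rw [← add_mul, hab, one_mul]
  rcases eq_or_lt_of_le ha with rfl | ha'
  · have hb1 : b = 1 := by linarith
    subst hb1
    constructor <;> linarith
  · have e1 : a * lo < a * x := mul_lt_mul_of_pos_left h1 ha'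
    have e2 : a * x < a * hi := mul_lt_mul_of_pos_left h2 ha'
    have e3 : b * lo ≤ b * y := mul_le_mul_of_nonneg_left h3.le hb
    have e4 : b * y ≤ b * hi := mul_le_mul_of_nonneg_left h4.le hb
    constructor <;> linarith

lemma polyC_convex (gr : ℝ) (φ0 : V → ℝ) : Convex ℝ (PolyC ends gr φ0) := by
  intro φ hφ ψ hψ a b ha hb hab
  have hsum : ∀ (t : Finset V) (χ ξ : V → ℝ),
      (∑ v ∈ t, (a • χ + b • ξ) v) = a * (∑ v ∈ t, χ v) + b * (∑ v ∈ t, ξ v) := by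
    intro t χ ξ
    rw [Finset.mul_sum, Finset.mul_sum, ← Finset.sum_add_distrib]
    exact Finset.sum_congr rfl (fun v _ => by simp [mul_comm])
  constructor
  · rw [hsum Finset.univ φ ψ, hφ.1, hψ.1, ← add_mul, hab, one_mul]
  · intro S hS
    have h1 := (hφ.2 S hS)
    have h2 := (hψ.2 S hS)
    rw [finsum_mem_eq_sum' S φ0, finsum_mem_eq_sum' S φ] at h1
    rw [finsum_mem_eq_sum' S φ0, finsum_mem_eq_sum' S ψ] at h2
    rw [finsum_mem_eq_sum' S φ0, finsum_mem_eq_sum' S (a • φ + b • ψ)]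
    have hcomb : ∑ v ∈ S.toFinite.toFinset, (a • φ + b • ψ) v =
        a * (∑ v ∈ S.toFinite.toFinset, φ v) + b * (∑ v ∈ S.toFinite.toFinset, ψ v) :=
      hsum _ φ ψ
    set c : ℝ := (cut ends S : ℝ) / 2
    have := combo_lemma ha hb hab h1.1 h1.2 h2.1 h2.2
    have hcc : a * c + b * c = c := by rw [← add_mul, hab, one_mul]
    constructor
    · rw [hcomb]; linarith [this.1]
    · rw [hcomb]; linarith [this.2]

lemma polyC_mem_self {gr : ℝ} {φ0 : V → ℝ} (h : φ0 ∈ OmegaSet ends gr) :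
    φ0 ∈ PolyC ends gr φ0 := by
  refine ⟨h.1, fun S hS => ?_⟩
  set L : ℝ := (∑ᶠ v ∈ S, φ0 v) - (cut ends S : ℝ) / 2 with hL
  have hne : L ≠ (⌊L⌋ : ℝ) := by
    intro heq
    apply h.2 S hS ⌊L⌋
    rw [ell]
    rw [hL] at heq
    linarith [heq]
  exact ⟨lt_of_le_of_ne (Int.floor_le L) (Ne.symm hne), Int.lt_floor_add_one L⟩

lemma polyC_subset_omega {gr : ℝ} {φ0 : V → ℝ} :
    PolyC ends gr φ0 ⊆ OmegaSet ends gr := by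
  intro φ hφ
  refine ⟨hφ.1, fun S hS d hd => ?_⟩
  obtain ⟨h1, h2⟩ := hφ.2 S hS
  rw [ell] at hd
  set k : ℤ := ⌊(∑ᶠ v ∈ S, φ0 v) - (cut ends S : ℝ) / 2⌋
  have hdval : (∑ᶠ v ∈ S, φ v) - (cut ends S : ℝ) / 2 = (d : ℝ) := by linarith
  rw [hdval] at h1 h2
  have hk1 : k < d := by exact_mod_cast h1
  have hk2 : (d : ℝ) < ((k + 1 : ℤ) : ℝ) := by push_cast; linarith
  have : d < k + 1 := by exact_mod_cast hk2
  omega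

lemma polyC_subset_component {gr : ℝ} {φ0 : V → ℝ} (h : φ0 ∈ OmegaSet ends gr) :
    PolyC ends gr φ0 ⊆ connectedComponentIn (OmegaSet ends gr) φ0 :=
  ((polyC_convex gr φ0).isPreconnected).subset_connectedComponentIn
    (polyC_mem_self h) polyC_subset_omega

lemma component_subset_polyC {gr : ℝ} {φ0 : V → ℝ} (h : φ0 ∈ OmegaSet ends gr) :
    connectedComponentIn (OmegaSet ends gr) φ0 ⊆ PolyC ends gr φ0 := by
  intro φ hφ
  have hφΩ : φ ∈ OmegaSet ends gr := connectedComponentIn_subset _ _ hφ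
  refine ⟨hφΩ.1, fun S hS => ?_⟩
  classical
  set c : ℝ := (cut ends S : ℝ) / 2 with hc
  set k : ℤ := ⌊(∑ᶠ v ∈ S, φ0 v) - c⌋ with hk
  set f : (V → ℝ) → ℝ := fun ψ => ∑ v ∈ S.toFinite.toFinset, ψ v with hf
  have hfc : Continuous f := continuous_finset_sum _ (fun v _ => continuous_apply v)
  have hfeq : ∀ ψ : V → ℝ, (∑ᶠ v ∈ S, ψ v) = f ψ := fun ψ => finsum_mem_eq_sum' S ψ
  have hnotint : ∀ ψ ∈ OmegaSet ends gr, ∀ d : ℤ, f ψ ≠ (d : ℝ) + c := by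
    intro ψ hψ d heq
    apply hψ.2 S hS d
    rw [ell, hfeq ψ, heq, hc]
    ring
  have hsub : connectedComponentIn (OmegaSet ends gr) φ0 ⊆
      f ⁻¹' Set.Ioo ((k : ℝ) + c) (((k : ℝ) + 1) + c) := by
    refine IsPreconnected.subset_left_of_subset_union
      (v := f ⁻¹' (Set.Iio ((k : ℝ) + c) ∪ Set.Ioi (((k : ℝ) + 1) + c)))
      (hfc.isOpen_preimage _ isOpen_Ioo)
      (hfc.isOpen_preimage _ (IsOpen.union isOpen_Iio isOpen_Ioi))
      ?_ ?_ ?_ isPreconnected_connectedComponentIn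
    · rw [Set.disjoint_left]
      intro ψ hψ1 hψ2
      simp only [Set.mem_preimage, Set.mem_Ioo, Set.mem_union, Set.mem_Iio,
        Set.mem_Ioi] at hψ1 hψ2
      rcases hψ2 with h' | h' <;> linarith [hψ1.1, hψ1.2]
    · intro ψ hψ
      have hψΩ : ψ ∈ OmegaSet ends gr := connectedComponentIn_subset _ _ hψ
      simp only [Set.mem_union, Set.mem_preimage, Set.mem_Ioo, Set.mem_Iio, Set.mem_Ioi]
      rcases lt_trichotomy (f ψ) ((k : ℝ) + c) with h' | h' | h'
      · exact Or.inr (Or.inl h')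
      · exact absurd h' (hnotint ψ hψΩ k)
      · rcases lt_trichotomy (f ψ) (((k : ℝ) + 1) + c) with h'' | h'' | h''
        · exact Or.inl ⟨h', h''⟩
        · exfalso
          apply hnotint ψ hψΩ (k + 1)
          rw [h'']; push_cast; ring
        · exact Or.inr (Or.inr h'')
    · refine ⟨φ0, mem_connectedComponentIn h, ?_⟩
      simp only [Set.mem_preimage, Set.mem_Ioo]
      have hk0 : (k : ℝ) ≤ f φ0 - c := by
        rw [hk, ← hfeq φ0]; exact Int.floor_le _
      have hne : f φ0 - c ≠ (k : ℝ) := by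
        intro heq
        exact hnotint φ0 h k (by linarith)
      have hlt : f φ0 - c < (k : ℝ) + 1 := by
        rw [hk, ← hfeq φ0]; exact Int.lt_floor_add_one _
      have := lt_of_le_of_ne hk0 (Ne.symm hne)
      exact ⟨by linarith, by linarith⟩
  have hmem := hsub hφ
  simp only [Set.mem_preimage, Set.mem_Ioo] at hmem
  rw [hfeq φ]
  exact ⟨by linarith [hmem.1], by linarith [hmem.2]⟩

end Poly
section Bounded

open Set

variable {V E : Type} [Fintype V] {ends : E → Sym2 V}

lemma ind_pair (S : Set V) (φ : V → ℝ) :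
    ∑ v, Set.indicator S (fun _ => (1 : ℝ)) v * φ v = ∑ v ∈ S.toFinite.toFinset, φ v := by
  classical
  rw [← Finset.sum_subset (Finset.subset_univ S.toFinite.toFinset)
    (fun v _ hv => by
      rw [Set.indicator_of_notMem (fun h => hv (S.toFinite.mem_toFinset.2 h)), zero_mul])]
  exact Finset.sum_congr rfl
    (fun v hv => by rw [Set.indicator_of_mem (S.toFinite.mem_toFinset.1 hv), one_mul])

lemma polyC_bounded (hconn : GraphConnected ends) (hcard : 2 ≤ Fintype.card V)
    (gr : ℝ) (φ0 : V → ℝ) : Bornology.IsBounded (PolyC ends gr φ0) := by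
  classical
  have hbdd : ∀ x ∈ Submodule.span ℝ (Gens ends),
      ∃ M : ℝ, ∀ φ ∈ PolyC ends gr φ0, |∑ v, x v * φ v| ≤ M := by
    intro x hx
    induction hx using Submodule.span_induction with
    | mem x hxg =>
      rcases hxg with ⟨S, hS, rfl⟩ | rfl
      · set k : ℤ := ⌊(∑ᶠ v ∈ S, φ0 v) - (cut ends S : ℝ) / 2⌋ with hk
        refine ⟨|(k : ℝ)| + (cut ends S : ℝ) / 2 + 1, fun φ hφ => ?_⟩
        obtain ⟨hlo, hhi⟩ := hφ.2 S hS
        rw [finsum_mem_eq_sum' S φ] at hlo hhi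
        rw [ind_pair S φ]
        have hc : (0 : ℝ) ≤ (cut ends S : ℝ) / 2 := by positivity
        have h1 := le_abs_self ((k : ℝ))
        have h2 := neg_abs_le ((k : ℝ))
        rw [abs_le]
        constructor <;> linarith
      · refine ⟨|gr - 1|, fun φ hφ => ?_⟩
        simp only [one_mul]
        rw [hφ.1]
    | zero => exact ⟨0, fun φ _ => by simp⟩
    | add x y hx hy ihx ihy =>
      obtain ⟨Mx, hMx⟩ := ihx
      obtain ⟨My, hMy⟩ := ihy
      refine ⟨Mx + My, fun φ hφ => ?_⟩
      have : ∑ v, (x + y) v * φ v = (∑ v, x v * φ v) + ∑ v, y v * φ v := by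
        rw [← Finset.sum_add_distrib]
        exact Finset.sum_congr rfl (fun v _ => by rw [Pi.add_apply, add_mul])
      rw [this]
      exact (abs_add_le _ _).trans (add_le_add (hMx φ hφ) (hMy φ hφ))
    | smul r x hx ih =>
      obtain ⟨Mx, hMx⟩ := ih
      refine ⟨|r| * Mx, fun φ hφ => ?_⟩
      have : ∑ v, (r • x) v * φ v = r * ∑ v, x v * φ v := by
        rw [Finset.mul_sum]
        exact Finset.sum_congr rfl
          (fun v _ => by rw [Pi.smul_apply, smul_eq_mul, mul_assoc])
      rw [this, abs_mul]
      exact mul_le_mul_of_nonneg_left (hMx φ hφ) (abs_nonneg r)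
  have hcoord : ∀ v : V, ∃ M : ℝ, ∀ φ ∈ PolyC ends gr φ0, |φ v| ≤ M := by
    intro v
    obtain ⟨M, hM⟩ := hbdd _ (singleton_ind_mem hconn hcard v)
    refine ⟨M, fun φ hφ => ?_⟩
    have hv : ∑ w, Set.indicator {v} (fun _ => (1 : ℝ)) w * φ w = φ v := by
      rw [ind_pair]
      have : ({v} : Set V).toFinite.toFinset = {v} := by
        ext x
        rw [Set.Finite.mem_toFinset, Finset.mem_singleton]
        exact Set.mem_singleton_iff
      rw [this, Finset.sum_singleton]
    have := hM φ hφ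
    rwa [hv] at this
  choose M hM using hcoord
  apply (Metric.isBounded_closedBall (x := (0 : V → ℝ)) (r := ∑ v, |M v|)).subset
  intro φ hφ
  rw [mem_closedBall_zero_iff]
  rw [pi_norm_le_iff_of_nonneg (Finset.sum_nonneg (fun v _ => abs_nonneg _))]
  intro v
  calc ‖φ v‖ = |φ v| := Real.norm_eq_abs _
    _ ≤ M v := hM v φ hφ
    _ ≤ |M v| := le_abs_self _
    _ ≤ ∑ w, |M w| := Finset.single_le_sum (fun w _ => abs_nonneg (M w)) (Finset.mem_univ v)

end Bounded
/-- For a connected multigraph with at least two vertices, every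
stability polytope of `V(Γ)` is convex and bounded. -/
theorem statement8 (V E : Type) [Fintype V] (ends : E → Sym2 V)
    (hconn : GraphConnected ends) (hcard : 2 ≤ Fintype.card V) (g : ℤ)
    (P : Set (V → ℝ)) (hP : IsStabPolytope ends ((g : ℝ)) P) :
    Convex ℝ P ∧ Bornology.IsBounded P := by
  obtain ⟨φ0, hφ0, hPeq⟩ := hP
  have hPC : P = PolyC ends ((g : ℝ)) φ0 := by
    rw [hPeq]
    exact subset_antisymm (component_subset_polyC hφ0) (polyC_subset_component hφ0)
  rw [hPC]
  exact ⟨polyC_convex _ _, polyC_bounded hconn hcard _ _⟩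

end ThetaPaper
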